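/- Let V be a 3-dimensional real vector space equipped with a nondegenerate symmetric bilinear form ⟨·,·⟩, and let C be a nonzero trilinear form on V satisfying (i) C(X,Y,Z) = -C(Y,X,Z), (ii) C(X,Y,Z) + C(Y,Z,X) + C(Z,X,Y) = 0, and (iii) the ⟨·,·⟩-trace of (X,Z) ↦ C(X,Y,Z) vanishes for every Y. Then every vector u ∈ V with C(u,·,·) = 0 is null, i.e., ⟨u,u⟩ = 0. -/

import Mathlib

open Module

/-- Every kernel vector of a nonzero Cotton-like tensor on a 3-dimensional
pseudo-Euclidean space is null. -/
theorem stmt0 {V : Type*} [AddCommGroup V] [Module ℝ V] [FiniteDimensional ℝ V]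
    (hdim : Module.finrank ℝ V = 3)
    (B : V →ₗ[ℝ] V →ₗ[ℝ] ℝ)
    (hBsymm : ∀ x y : V, B x y = B y x)
    (hBnondeg : ∀ x : V, (∀ y : V, B x y = 0) → x = 0)
    (C : V →ₗ[ℝ] V →ₗ[ℝ] V →ₗ[ℝ] ℝ)
    (hCne : C ≠ 0)
    (hCanti : ∀ X Y Z : V, C X Y Z = - C Y X Z)
    (hCcyc : ∀ X Y Z : V, C X Y Z + C Y Z X + C Z X Y = 0)
    (hCtrace : ∀ (Y : V) (T : V →ₗ[ℝ] V),
      (∀ X Z : V, B (T X) Z = C X Y Z) → LinearMap.trace ℝ V T = 0)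
    (u : V) (hu : ∀ Y Z : V, C u Y Z = 0) :
    B u u = 0 := by
  by_contra h0
  apply hCne
  -- C vanishes when u is in the second or third slot
  have hu2 : ∀ X Z : V, C X u Z = 0 := fun X Z => by rw [hCanti, hu, neg_zero]
  have hu3 : ∀ X Y : V, C X Y u = 0 := fun X Y => by
    have h := hCcyc X Y u
    rw [hu2, hu] at h; linarith
  -- antisymmetry: diagonal vanishes
  have hdiag : ∀ X Z : V, C X X Z = 0 := fun X Z => by
    have := hCanti X X Z; linarith
  -- polarization
  have polar : ∀ (S : Submodule ℝ V), (∀ v ∈ S, B v v = 0) →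
      ∀ v ∈ S, ∀ w ∈ S, B v w = 0 := by
    intro S hS v hv w hw
    have h1 := hS (v + w) (S.add_mem hv hw)
    have h2 := hS v hv
    have h3 := hS w hw
    have hs := hBsymm v w
    simp only [map_add, LinearMap.add_apply] at h1
    linarith
  -- the kernel of B u has dimension ≥ 2
  have hK2 : ∀ x : V, 2 ≤ finrank ℝ (LinearMap.ker (B x)) := by
    intro x
    have h1 := LinearMap.finrank_range_add_finrank_ker (B x)
    have h2 : finrank ℝ (LinearMap.range (B x)) ≤ 1 := by
      have := Submodule.finrank_le (LinearMap.range (B x))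
      simpa using this
    omega
  -- find e1 orthogonal to u with B e1 e1 ≠ 0
  obtain ⟨e1, hue1, he1⟩ : ∃ e1, B u e1 = 0 ∧ B e1 e1 ≠ 0 := by
    by_contra hc
    push_neg at hc
    have hK0 : ∀ v ∈ LinearMap.ker (B u), B v v = 0 := fun v hv =>
      hc v (LinearMap.mem_ker.mp hv)
    have hP := polar _ hK0
    have hbot : LinearMap.ker (B u) = ⊥ := by
      rw [Submodule.eq_bot_iff]
      intro v hv
      apply hBnondeg
      intro z
      have hz : z - (B u z / B u u) • u ∈ LinearMap.ker (B u) := by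
        rw [LinearMap.mem_ker, map_sub, map_smul]
        simp only [smul_eq_mul, div_mul_cancel₀ _ h0, sub_self]
      have hvz := hP v hv _ hz
      rw [map_sub, map_smul] at hvz
      have hvu : B v u = 0 := by rw [hBsymm]; exact LinearMap.mem_ker.mp hv
      rw [hvu] at hvz
      simpa using hvz
    have := hK2 u
    rw [hbot, finrank_bot] at this
    omega
  -- find e2 orthogonal to u and e1 with B e2 e2 ≠ 0
  obtain ⟨e2, hue2, h12, he2⟩ :
      ∃ e2, B u e2 = 0 ∧ B e1 e2 = 0 ∧ B e2 e2 ≠ 0 := by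
    by_contra hc
    push_neg at hc
    set S := LinearMap.ker (B u) ⊓ LinearMap.ker (B e1) with hS
    have hK0 : ∀ v ∈ S, B v v = 0 := by
      intro v hv
      rw [Submodule.mem_inf] at hv
      exact hc v (LinearMap.mem_ker.mp hv.1) (LinearMap.mem_ker.mp hv.2)
    have hP := polar _ hK0
    have hbot : S = ⊥ := by
      rw [Submodule.eq_bot_iff]
      intro v hv
      have hv' := hv
      rw [Submodule.mem_inf] at hv'
      have hvu : B v u = 0 := by rw [hBsymm]; exact LinearMap.mem_ker.mp hv'.1
      have hve1 : B v e1 = 0 := by rw [hBsymm]; exact LinearMap.mem_ker.mp hv'.2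
      apply hBnondeg
      intro z
      have hz : z - (B u z / B u u) • u - (B e1 z / B e1 e1) • e1 ∈ S := by
        rw [hS, Submodule.mem_inf]
        constructor
        · rw [LinearMap.mem_ker, map_sub, map_sub, map_smul, map_smul]
          simp only [smul_eq_mul, hue1, mul_zero, sub_zero, div_mul_cancel₀ _ h0, sub_self]
        · rw [LinearMap.mem_ker, map_sub, map_sub, map_smul, map_smul]
          have : B e1 u = 0 := by rw [hBsymm]; exact hue1
          simp only [smul_eq_mul, this, mul_zero, sub_zero, div_mul_cancel₀ _ he1, sub_self]
      have hvz := hP v hv _ hz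
      rw [map_sub, map_sub, map_smul, map_smul, hvu, hve1] at hvz
      simpa using hvz
    have hdimS : 1 ≤ finrank ℝ S := by
      rw [hS]
      have h1 := Submodule.finrank_sup_add_finrank_inf_eq
        (LinearMap.ker (B u)) (LinearMap.ker (B e1))
      have h2 : finrank ℝ ↥(LinearMap.ker (B u) ⊔ LinearMap.ker (B e1)) ≤ 3 := by
        have := Submodule.finrank_le (LinearMap.ker (B u) ⊔ LinearMap.ker (B e1))
        omega
      have h3 := hK2 u
      have h4 := hK2 e1
      omega
    rw [hbot, finrank_bot] at hdimS
    omega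
  -- symmetric versions
  have h1u : B e1 u = 0 := by rw [hBsymm]; exact hue1
  have h2u : B e2 u = 0 := by rw [hBsymm]; exact hue2
  have h21 : B e2 e1 = 0 := by rw [hBsymm]; exact h12
  -- the basis
  set w : Fin 3 → V := ![u, e1, e2] with hw
  have li : LinearIndependent ℝ w := by
    rw [Fintype.linearIndependent_iff]
    intro g hg i
    fin_cases i
    · have h := congrArg (B u) hg
      simp only [hw, Fin.sum_univ_three, Matrix.cons_val_zero, Matrix.cons_val_one,
        Matrix.head_cons, map_add, map_smul, map_zero, LinearMap.add_apply,
        LinearMap.smul_apply, LinearMap.zero_apply, smul_eq_mul,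
        Matrix.cons_val_two, Matrix.tail_cons, hue1, hue2] at h
      have : g 0 * B u u = 0 := by linarith
      exact (mul_eq_zero.mp this).resolve_right h0
    · have h := congrArg (B e1) hg
      simp only [hw, Fin.sum_univ_three, Matrix.cons_val_zero, Matrix.cons_val_one,
        Matrix.head_cons, map_add, map_smul, map_zero, LinearMap.add_apply,
        LinearMap.smul_apply, LinearMap.zero_apply, smul_eq_mul,
        Matrix.cons_val_two, Matrix.tail_cons, h1u, h12] at h
      have : g 1 * B e1 e1 = 0 := by linarith
      exact (mul_eq_zero.mp this).resolve_right he1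
    · have h := congrArg (B e2) hg
      simp only [hw, Fin.sum_univ_three, Matrix.cons_val_zero, Matrix.cons_val_one,
        Matrix.head_cons, map_add, map_smul, map_zero, LinearMap.add_apply,
        LinearMap.smul_apply, LinearMap.zero_apply, smul_eq_mul,
        Matrix.cons_val_two, Matrix.tail_cons, h2u, h21] at h
      have : g 2 * B e2 e2 = 0 := by linarith
      exact (mul_eq_zero.mp this).resolve_right he2
  have hcard : Fintype.card (Fin 3) = finrank ℝ V := by simp [hdim]
  set b : Basis (Fin 3) ℝ V := basisOfLinearIndependentOfCardEqFinrank li hcard with hbdef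
  have hb : ∀ i, b i = w i := by
    intro i
    rw [hbdef, coe_basisOfLinearIndependentOfCardEqFinrank]
  -- the key trace identity
  have key : ∀ Y : V,
      (B u u)⁻¹ * C u Y u + (B e1 e1)⁻¹ * C e1 Y e1 + (B e2 e2)⁻¹ * C e2 Y e2 = 0 := by
    intro Y
    set T : V →ₗ[ℝ] V :=
      ∑ k : Fin 3, (B (w k) (w k))⁻¹ •
        LinearMap.smulRight ((C.flip Y).flip (w k)) (w k) with hT
    have hTapp : ∀ X : V, T X =
        ∑ k : Fin 3, ((B (w k) (w k))⁻¹ * C X Y (w k)) • w k := by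
      intro X
      rw [hT]
      simp [LinearMap.sum_apply, LinearMap.smul_apply, LinearMap.smulRight_apply,
        LinearMap.flip_apply, smul_smul]
    have hprop : ∀ X Z : V, B (T X) Z = C X Y Z := by
      intro X Z
      have heq : B (T X) = C X Y := by
        apply b.ext
        intro j
        rw [hb j, hTapp X]
        fin_cases j <;>
          simp [hw, Fin.sum_univ_three, smul_eq_mul,
            hue1, hue2, h1u, h12, h2u, h21] <;>
          field_simp
      exact LinearMap.congr_fun heq Z
    have htr := hCtrace Y T hprop
    rw [LinearMap.trace_eq_matrix_trace ℝ b, Matrix.trace] at htr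
    have hrepr : ∀ i : Fin 3, (LinearMap.toMatrix b b T).diag i =
        (B (w i) (w i))⁻¹ * C (w i) Y (w i) := by
      intro i
      have hTb : T (b i) = ∑ k : Fin 3, ((B (w k) (w k))⁻¹ * C (b i) Y (w k)) • b k := by
        rw [hTapp (b i)]
        congr 1
        ext k
        rw [hb k]
      rw [Matrix.diag_apply, LinearMap.toMatrix_apply, hTb, b.repr_sum_self, hb i]
    rw [Fin.sum_univ_three, hrepr 0, hrepr 1, hrepr 2] at htr
    simpa [hw] using htr
  -- apply with Y = e1 and Y = e2
  have k1 := key e1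
  rw [hu (e1) u, hdiag e1 e1] at k1
  have hC212 : C e2 e1 e2 = 0 := by
    have : (B e2 e2)⁻¹ * C e2 e1 e2 = 0 := by linarith
    rcases mul_eq_zero.mp this with h | h
    · exact absurd (inv_eq_zero.mp h) he2
    · exact h
  have k2 := key e2
  rw [hu (e2) u, hdiag e2 e2] at k2
  have hC121 : C e1 e2 e1 = 0 := by
    have : (B e1 e1)⁻¹ * C e1 e2 e1 = 0 := by linarith
    rcases mul_eq_zero.mp this with h | h
    · exact absurd (inv_eq_zero.mp h) he1
    · exact h
  have hC122 : C e1 e2 e2 = 0 := by rw [hCanti]; rw [hC212]; ring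
  have hC211 : C e2 e1 e1 = 0 := by rw [hCanti]; rw [hC121]; ring
  -- conclude C = 0 by checking on the basis
  apply b.ext
  intro i
  apply b.ext
  intro j
  apply b.ext
  intro k
  rw [hb i, hb j, hb k]
  show C (w i) (w j) (w k) = (0 : V →ₗ[ℝ] V →ₗ[ℝ] V →ₗ[ℝ] ℝ) (w i) (w j) (w k)
  simp only [LinearMap.zero_apply]
  fin_cases i <;> fin_cases j <;> fin_cases k <;>
    simp [hw, hu, hu2, hu3, hdiag, hC212, hC121, hC122, hC211]
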